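/- Let V be a finite-dimensional real or complex vector space and ρ an action of a semigroup Γ on V by continuous linear endomorphisms. Then ρ is expansive (i.e., there is a neighborhood U of 0 with ⋂_{γ∈Γ} ρ(γ)⁻¹(U) = {0}) if and only if for every nonzero v ∈ V the orbit {ρ(γ)v : γ ∈ Γ} is unbounded. -/

import Mathlib

/-- For an endomorphism action `ρ` of a semigroup (with identity) `Γ` on a
finite-dimensional real or complex vector space `V` by continuous linear maps, `ρ` is
expansive (some neighborhood `U` of `0` satisfies `⋂_γ ρ(γ)⁻¹ U = {0}`) iff every nonzero
`v ∈ V` has unbounded orbit `{ρ(γ) v : γ ∈ Γ}`. -/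
theorem expansive_iff_orbits_unbounded
    {𝕜 V Γ : Type*} [RCLike 𝕜] [NormedAddCommGroup V] [NormedSpace 𝕜 V]
    [FiniteDimensional 𝕜 V] [Monoid Γ] (ρ : Γ →* (V →L[𝕜] V)) :
    (∃ U ∈ nhds (0 : V), ∀ v : V, (∀ γ : Γ, ρ γ v ∈ U) → v = 0) ↔
      ∀ v : V, v ≠ 0 → ¬ Bornology.IsBounded (Set.range fun γ : Γ => ρ γ v) := by
  constructor
  · rintro ⟨U, hU, hexp⟩ v hv hb
    obtain ⟨R, hR⟩ := isBounded_iff_forall_norm_le.1 hb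
    obtain ⟨ε, hε, hball⟩ := Metric.mem_nhds_iff.1 hU
    have hR0 : 0 ≤ R := le_trans (norm_nonneg _) (hR _ ⟨1, rfl⟩)
    set c : ℝ := ε / (2 * (R + 1)) with hc
    have hc0 : 0 < c := by positivity
    have hw : ((c : 𝕜) • v) = 0 := by
      apply hexp
      intro γ
      apply hball
      simp only [Metric.mem_ball, dist_zero_right, map_smul, norm_smul,
        RCLike.norm_ofReal, abs_of_pos hc0]
      have h1 : ‖ρ γ v‖ ≤ R := hR _ ⟨γ, rfl⟩
      calc c * ‖ρ γ v‖ ≤ c * (R + 1) := by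
            apply mul_le_mul_of_nonneg_left (by linarith) hc0.le
        _ = ε / 2 := by
            rw [hc]; field_simp
        _ < ε := by linarith
    rcases smul_eq_zero.1 hw with h | h
    · exact absurd h (by simpa using hc0.ne')
    · exact hv h
  · intro h
    refine ⟨Metric.ball 0 1, Metric.ball_mem_nhds 0 one_pos, fun v hv => ?_⟩
    by_contra hv0
    exact h v hv0 (Metric.isBounded_ball.subset
      (Set.range_subset_iff.2 fun γ => hv γ))
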